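/- Let β, c, D, ρ > 0 with Dβρ² − cρ + 1 = 0, and let U, V, W, χ, Y be reals with 0 ≤ U, 0 ≤ W ≤ cU, Y ≤ 0, χ ≥ 0, and Y = ρ(U − βV). Then −cY/D + (U − βV)/D − ρ(−cU + UχY + W − βY) ≥ 0. -/

import Mathlib

theorem face_Y_computation (β c D ρ U V W χ Y : ℝ)
    (hβ : 0 < β) (hc : 0 < c) (hD : 0 < D) (hρ : 0 < ρ)
    (hroot : D * β * ρ ^ 2 - c * ρ + 1 = 0)
    (hU0 : 0 ≤ U) (hW0 : 0 ≤ W) (hWcU : W ≤ c * U)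
    (hY0 : Y ≤ 0) (hχ0 : 0 ≤ χ) (hface : Y = ρ * (U - β * V)) :
    -c * Y / D + (U - β * V) / D - ρ * (-c * U + U * χ * Y + W - β * Y) ≥ 0 := by
  have hUV : U - β * V = Y / ρ := by
    rw [hface]; field_simp
  rw [hUV]
  have hZ : -c * Y / D + Y / ρ / D = -(ρ * β * Y) := by
    field_simp
    linear_combination Y * hroot
  rw [hZ]
  have h1 : 0 ≤ ρ * (c * U - W) := mul_nonneg hρ.le (by linarith)
  have h2 : 0 ≤ ρ * (U * χ * (-Y)) :=
    mul_nonneg hρ.le (mul_nonneg (mul_nonneg hU0 hχ0) (by linarith))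
  nlinarith [h1, h2]
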